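/- Let G be a group with finite generating set S and H an infinite index subgroup of G. Then for each element h ∈ H there exists an H-perpendicular geodesic ray in the Cayley graph Γ(G,S) with initial point h, i.e. a geodesic ray γ with γ(0) = h and d_S(γ(r), H) = r for all r > 0. -/

import Mathlib

/-- The word length of `g` with respect to the (symmetrized) alphabet `S`. -/
noncomputable def wordLength {G : Type*} [Group G] (S : Set G) (g : G) : ℕ :=
  sInf {n | ∃ w : List G, (∀ x ∈ w, x ∈ S ∨ x⁻¹ ∈ S) ∧ w.prod = g ∧ w.length = n}

/-- The word metric on `G` associated to the generating set `S`. -/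
noncomputable def wordDist {G : Type*} [Group G] (S : Set G) (x y : G) : ℕ :=
  wordLength S (x⁻¹ * y)


/-- The distance from a point to a subgroup in the word metric. -/
noncomputable def distToSubgroup {G : Type*} [Group G] (S : Set G) (H : Subgroup G) (x : G) : ℕ :=
  sInf {n | ∃ h ∈ H, n = wordDist S x h}

section Aux
variable {G : Type*} [Group G] (S : Set G)

def WLset (g : G) : Set ℕ :=
  {n | ∃ w : List G, (∀ x ∈ w, x ∈ S ∨ x⁻¹ ∈ S) ∧ w.prod = g ∧ w.length = n}

lemma wlset_nonempty (hSgen : Subgroup.closure S = ⊤) (g : G) : (WLset S g).Nonempty := by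
  have hg : g ∈ (Subgroup.closure S).toSubmonoid := by rw [hSgen]; trivial
  rw [Subgroup.closure_toSubmonoid] at hg
  obtain ⟨w, hw, hprod⟩ := Submonoid.exists_list_of_mem_closure hg
  refine ⟨w.length, w, fun x hx => ?_, hprod, rfl⟩
  rcases hw x hx with h | h
  · exact Or.inl h
  · exact Or.inr (by simpa using h)

lemma wordLength_spec (hSgen : Subgroup.closure S = ⊤) (g : G) :
    ∃ w : List G, (∀ x ∈ w, x ∈ S ∨ x⁻¹ ∈ S) ∧ w.prod = g ∧ w.length = wordLength S g :=
  Nat.sInf_mem (wlset_nonempty S hSgen g)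

lemma wordLength_le (g : G) (w : List G) (hw : ∀ x ∈ w, x ∈ S ∨ x⁻¹ ∈ S)
    (hprod : w.prod = g) : wordLength S g ≤ w.length :=
  Nat.sInf_le ⟨w, hw, hprod, rfl⟩

lemma wordLength_one : wordLength S (1 : G) = 0 :=
  Nat.le_zero.mp (wordLength_le S 1 [] (by simp) (by simp))

lemma wordLength_inv (hSgen : Subgroup.closure S = ⊤) (g : G) :
    wordLength S g⁻¹ ≤ wordLength S g := by
  obtain ⟨w, hw, hprod, hlen⟩ := wordLength_spec S hSgen g
  have := wordLength_le S g⁻¹ ((w.map (·⁻¹)).reverse) ?_ ?_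
  · simpa [hlen] using this
  · intro x hx
    simp only [List.mem_reverse, List.mem_map] at hx
    obtain ⟨y, hy, rfl⟩ := hx
    rcases hw y hy with h | h
    · exact Or.inr (by simpa using h)
    · exact Or.inl h
  · rw [List.prod_reverse_noncomm, List.map_map]
    simp [hprod]

lemma wordLength_mul_le (hSgen : Subgroup.closure S = ⊤) (a b : G) :
    wordLength S (a * b) ≤ wordLength S a + wordLength S b := by
  obtain ⟨w, hw, hprod, hlen⟩ := wordLength_spec S hSgen a
  obtain ⟨v, hv, hprodv, hlenv⟩ := wordLength_spec S hSgen b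
  have := wordLength_le S (a * b) (w ++ v) ?_ (by simp [hprod, hprodv])
  · simpa [hlen, hlenv] using this
  · intro x hx
    rcases List.mem_append.mp hx with h | h
    · exact hw x h
    · exact hv x h

lemma wordDist_triangle (hSgen : Subgroup.closure S = ⊤) (x y z : G) :
    wordDist S x z ≤ wordDist S x y + wordDist S y z := by
  have := wordLength_mul_le S hSgen (x⁻¹ * y) (y⁻¹ * z)
  simpa [wordDist, mul_assoc] using this

lemma wordDist_symm (hSgen : Subgroup.closure S = ⊤) (x y : G) :
    wordDist S x y = wordDist S y x := by
  have h1 := wordLength_inv S hSgen (x⁻¹ * y)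
  have h2 := wordLength_inv S hSgen (y⁻¹ * x)
  simp only [mul_inv_rev, inv_inv] at h1 h2
  unfold wordDist
  omega

lemma wordDist_left_invariant (g x y : G) : wordDist S (g * x) (g * y) = wordDist S x y := by
  simp [wordDist, mul_assoc]

lemma wordDist_gen (x s : G) (hs : s ∈ S ∨ s⁻¹ ∈ S) : wordDist S x (x * s) ≤ 1 := by
  have := wordLength_le S s [s] (by simpa using hs) (by simp)
  simpa [wordDist] using this

variable (H : Subgroup G)

lemma dts_nonempty (x : G) : {n | ∃ h ∈ H, n = wordDist S x h}.Nonempty :=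
  ⟨wordDist S x 1, 1, H.one_mem, rfl⟩

lemma dts_spec (x : G) : ∃ h ∈ H, distToSubgroup S H x = wordDist S x h :=
  Nat.sInf_mem (dts_nonempty S H x)

lemma dts_le (x : G) (k : G) (hk : k ∈ H) : distToSubgroup S H x ≤ wordDist S x k :=
  Nat.sInf_le ⟨k, hk, rfl⟩

lemma dts_lipschitz (hSgen : Subgroup.closure S = ⊤) (x y : G) :
    distToSubgroup S H x ≤ wordDist S x y + distToSubgroup S H y := by
  obtain ⟨k, hk, hdy⟩ := dts_spec S H y
  calc distToSubgroup S H x ≤ wordDist S x k := dts_le S H x k hk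
    _ ≤ wordDist S x y + wordDist S y k := wordDist_triangle S hSgen x y k
    _ = wordDist S x y + distToSubgroup S H y := by rw [hdy]

lemma dts_invariant (x : G) (k : G) (hk : k ∈ H) :
    distToSubgroup S H (k * x) = distToSubgroup S H x := by
  unfold distToSubgroup
  congr 1
  ext n
  constructor
  · rintro ⟨h, hhH, rfl⟩
    exact ⟨k⁻¹ * h, H.mul_mem (H.inv_mem hk) hhH,
      by rw [← wordDist_left_invariant S k x (k⁻¹ * h)]; group⟩
  · rintro ⟨h, hhH, rfl⟩
    exact ⟨k * h, H.mul_mem hk hhH, by rw [← wordDist_left_invariant S k x h]⟩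

/-- The ball of radius `n` is finite. -/
lemma ball_finite (hSfin : S.Finite) (hSgen : Subgroup.closure S = ⊤) (n : ℕ) :
    {g : G | wordLength S g ≤ n}.Finite := by
  classical
  have : Finite {x : G // x ∈ S ∨ x⁻¹ ∈ S} := by
    have : {x : G | x ∈ S ∨ x⁻¹ ∈ S} = S ∪ (fun x : G => x⁻¹) '' S := by
      ext x
      simp only [Set.mem_setOf_eq, Set.mem_union, Set.mem_image]
      constructor
      · rintro (h | h)
        · exact Or.inl h
        · exact Or.inr ⟨x⁻¹, h, by simp⟩
      · rintro (h | ⟨y, hy, rfl⟩)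
        · exact Or.inl h
        · exact Or.inr (by simpa using hy)
    have hfin : ({x : G | x ∈ S ∨ x⁻¹ ∈ S}).Finite := this ▸ hSfin.union (hSfin.image _)
    exact hfin
  have hlists : {l : List {x : G // x ∈ S ∨ x⁻¹ ∈ S} | l.length ≤ n}.Finite :=
    List.finite_length_le _ n
  have himg := hlists.image (fun l => (l.map Subtype.val).prod)
  refine himg.subset ?_
  intro g hg
  obtain ⟨w, hw, hprod, hlen⟩ := wordLength_spec S hSgen g
  refine ⟨w.attach.map (fun x => ⟨x.1, hw x.1 x.2⟩), ?_, ?_⟩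
  · simpa [hlen] using (hg : wordLength S g ≤ n)
  · simp only [List.map_map]
    simpa using hprod

/-- If `H` has infinite index, the distance to `H` is unbounded. -/
lemma dts_unbounded (hSfin : S.Finite) (hSgen : Subgroup.closure S = ⊤)
    (hind : H.index = 0) (N : ℕ) : ∃ x : G, N ≤ distToSubgroup S H x := by
  by_contra hcon
  push_neg at hcon
  -- every element is within distance N of H
  have hcover : ∀ g : G, ∃ b : G, wordLength S b ≤ N ∧ (g : G ⧸ H) = (b : G ⧸ H) := by
    intro g
    obtain ⟨k, hkH, hd⟩ := dts_spec S H g⁻¹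
    have hle : wordDist S g⁻¹ k ≤ N := by
      rw [← hd]; exact le_of_lt (hcon g⁻¹)
    refine ⟨g * k, by simpa [wordDist] using hle, ?_⟩
    exact (QuotientGroup.eq.mpr (by simpa using hkH)).symm
  have hball := ball_finite S hSfin hSgen N
  have hfin : (Set.univ : Set (G ⧸ H)).Finite := by
    have := hball.image (fun b : G => (b : G ⧸ H))
    refine this.subset ?_
    rintro q -
    obtain ⟨g, rfl⟩ := QuotientGroup.mk_surjective q
    obtain ⟨b, hb, heq⟩ := hcover g
    exact ⟨b, hb, heq.symm⟩
  have : Finite (G ⧸ H) := Set.finite_univ_iff.mp hfin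
  have : H.index ≠ 0 := Subgroup.index_ne_zero_of_finite
  exact this hind

/-- A perpendicular segment of length `N` starting at the identity. -/
def Seg (N : ℕ) (σ : ℕ → G) : Prop :=
  σ 0 = 1 ∧ (∀ i < N, ∃ s : G, (s ∈ S ∨ s⁻¹ ∈ S) ∧ σ (i + 1) = σ i * s) ∧
    ∀ i ≤ N, distToSubgroup S H (σ i) = i

lemma seg_mono {N M : ℕ} (hNM : N ≤ M) {σ : ℕ → G} (h : Seg S H M σ) : Seg S H N σ :=
  ⟨h.1, fun i hi => h.2.1 i (lt_of_lt_of_le hi hNM), fun i hi => h.2.2 i (le_trans hi hNM)⟩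

lemma seg_exists (hSfin : S.Finite) (hSgen : Subgroup.closure S = ⊤)
    (hind : H.index = 0) (N : ℕ) : ∃ σ : ℕ → G, Seg S H N σ := by
  obtain ⟨x, hx⟩ := dts_unbounded S H hSfin hSgen hind N
  obtain ⟨p, hpH, hd⟩ := dts_spec S H x
  -- a word for p⁻¹ * x of minimal length
  obtain ⟨w, hw, hprod, hlen⟩ := wordLength_spec S hSgen (p⁻¹ * x)
  have hlen' : w.length = distToSubgroup S H x := by
    rw [hlen, hd, wordDist_symm S hSgen]
    rfl
  set D := distToSubgroup S H x with hD
  -- σ i = product of the first i letters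
  refine ⟨fun i => (w.take i).prod, rfl, ?_, ?_⟩
  · intro i hi
    have hiw : i < w.length := by omega
    refine ⟨w.get ⟨i, hiw⟩, hw _ (List.get_mem w ⟨i, hiw⟩), ?_⟩
    show (w.take (i+1)).prod = (w.take i).prod * w.get ⟨i, hiw⟩
    rw [← List.take_concat_get hiw, List.prod_concat]
    rfl
  · intro i hi
    have hiD : i ≤ D := le_trans hi hx
    show distToSubgroup S H ((w.take i).prod) = i
    set τ : G := (w.take i).prod with hτ
    have hwlτ : wordLength S τ ≤ i := by
      have := wordLength_le S τ (w.take i) (fun y hy => hw y (List.mem_of_mem_take hy)) rfl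
      calc wordLength S τ ≤ (w.take i).length := this
        _ ≤ i := by simp [List.length_take]
    have hinv : distToSubgroup S H τ = distToSubgroup S H (p * τ) :=
      (dts_invariant S H τ p hpH).symm
    -- upper bound
    have hub : distToSubgroup S H (p * τ) ≤ i := by
      have h1 : distToSubgroup S H (p * τ) ≤ wordDist S (p * τ) p := dts_le S H _ p hpH
      have h2 : wordDist S (p * τ) p = wordLength S τ⁻¹ := by
        unfold wordDist
        congr 1
        group
      have h3 : wordLength S τ⁻¹ ≤ wordLength S τ := wordLength_inv S hSgen τ
      omega
    -- lower bound
    have hlb : i ≤ distToSubgroup S H (p * τ) := by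
      have hdrop : wordDist S x (p * τ) ≤ D - i := by
        have hsplit : (w.drop i).prod⁻¹ = x⁻¹ * (p * τ) := by
          have : τ * (w.drop i).prod = p⁻¹ * x := by
            rw [hτ, ← List.prod_append, List.take_append_drop, hprod]
          have h4 : (w.drop i).prod = τ⁻¹ * (p⁻¹ * x) := by
            rw [← this]; group
          rw [h4]; group
        have h5 : wordDist S x (p * τ) = wordLength S (w.drop i).prod⁻¹ := by
          unfold wordDist
          rw [hsplit]
        have h6 : wordLength S (w.drop i).prod⁻¹ ≤ wordLength S (w.drop i).prod :=
          wordLength_inv S hSgen _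
        have h7 : wordLength S (w.drop i).prod ≤ (w.drop i).length :=
          wordLength_le S _ _ (fun y hy => hw y (List.mem_of_mem_drop hy)) rfl
        have h8 : (w.drop i).length = D - i := by
          rw [List.length_drop, hlen']
        omega
      have h9 := dts_lipschitz S H hSgen x (p * τ)
      omega
    omega

lemma symm_finite (hSfin : S.Finite) : Finite {x : G // x ∈ S ∨ x⁻¹ ∈ S} := by
  have heq : {x : G | x ∈ S ∨ x⁻¹ ∈ S} = S ∪ (fun x : G => x⁻¹) '' S := by
    ext x
    simp only [Set.mem_setOf_eq, Set.mem_union, Set.mem_image]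
    constructor
    · rintro (h | h)
      · exact Or.inl h
      · exact Or.inr ⟨x⁻¹, h, by simp⟩
    · rintro (h | ⟨y, hy, rfl⟩)
      · exact Or.inl h
      · exact Or.inr (by simpa using hy)
  have hfin : ({x : G | x ∈ S ∨ x⁻¹ ∈ S}).Finite := heq ▸ hSfin.union (hSfin.image _)
  exact hfin

lemma seg_wordLength (hSgen : Subgroup.closure S = ⊤) {N : ℕ} {σ : ℕ → G}
    (h : Seg S H N σ) : ∀ i ≤ N, wordLength S (σ i) ≤ i := by
  intro i
  induction i with
  | zero => intro _; simp [h.1, wordLength_one]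
  | succ i ih =>
    intro hi
    obtain ⟨s, hs, hstep⟩ := h.2.1 i (by omega)
    have h1 : wordLength S (σ i * s) ≤ wordLength S (σ i) + wordLength S s :=
      wordLength_mul_le S hSgen _ _
    have h2 : wordLength S s ≤ 1 := by
      have := wordLength_le S s [s] (by simpa using hs) (by simp)
      simpa using this
    have h3 := ih (by omega)
    rw [hstep]
    omega

/-- `g` is `n`-extendable: it sits at position `n` on arbitrarily long perpendicular
segments from the identity. -/
def PerpExt (n : ℕ) (g : G) : Prop := ∀ N : ℕ, ∃ σ : ℕ → G, Seg S H (n + N) σ ∧ σ n = g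

lemma ext_zero (hSfin : S.Finite) (hSgen : Subgroup.closure S = ⊤) (hind : H.index = 0) :
    PerpExt S H 0 1 := by
  intro N
  obtain ⟨σ, hσ⟩ := seg_exists S H hSfin hSgen hind N
  exact ⟨σ, by simpa using hσ, hσ.1⟩

lemma ext_dts {n : ℕ} {g : G} (h : PerpExt S H n g) : distToSubgroup S H g = n := by
  obtain ⟨σ, hσ, rfl⟩ := h 0
  exact hσ.2.2 n (by omega)

lemma ext_step (hSfin : S.Finite) (hSgen : Subgroup.closure S = ⊤) {n : ℕ} {g : G}
    (hg : PerpExt S H n g) : ∃ s : G, (s ∈ S ∨ s⁻¹ ∈ S) ∧ PerpExt S H (n + 1) (g * s) := by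
  classical
  choose σ hσ1 hσ2 using fun N => hg (N + 1)
  have hstep : ∀ N : ℕ, ∃ s : G, (s ∈ S ∨ s⁻¹ ∈ S) ∧ σ N (n + 1) = g * s := by
    intro N
    obtain ⟨s, hs, h⟩ := (hσ1 N).2.1 n (by omega)
    exact ⟨s, hs, by rw [h, hσ2 N]⟩
  choose sf hsf1 hsf2 using hstep
  have : Finite {x : G // x ∈ S ∨ x⁻¹ ∈ S} := symm_finite S hSfin
  obtain ⟨b, hb⟩ := Finite.exists_infinite_fiber (fun N => (⟨sf N, hsf1 N⟩ :
    {x : G // x ∈ S ∨ x⁻¹ ∈ S}))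
  have hbinf : ((fun N => (⟨sf N, hsf1 N⟩ : {x : G // x ∈ S ∨ x⁻¹ ∈ S})) ⁻¹' {b}).Infinite :=
    Set.infinite_coe_iff.mp hb
  refine ⟨b.1, b.2, ?_⟩
  intro N
  obtain ⟨M, hM, hMN⟩ := hbinf.exists_gt N
  have hfM : sf M = b.1 := congrArg Subtype.val hM
  refine ⟨σ M, ?_, ?_⟩
  · exact seg_mono S H (by omega) (hσ1 M)
  · rw [hsf2 M, hfM]

lemma ext_exists (hSfin : S.Finite) (hSgen : Subgroup.closure S = ⊤) (hind : H.index = 0)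
    (n : ℕ) : ∃ g : G, PerpExt S H n g := by
  classical
  choose σ hσ using fun N => seg_exists S H hSfin hSgen hind (n + N)
  have hball : Finite {g : G // wordLength S g ≤ n} :=
    (ball_finite S hSfin hSgen n).to_subtype
  have hmem : ∀ N, wordLength S (σ N n) ≤ n :=
    fun N => seg_wordLength S H hSgen (hσ N) n (by omega)
  obtain ⟨b, hb⟩ := Finite.exists_infinite_fiber (fun N => (⟨σ N n, hmem N⟩ :
    {g : G // wordLength S g ≤ n}))
  have hbinf : ((fun N => (⟨σ N n, hmem N⟩ : {g : G // wordLength S g ≤ n})) ⁻¹' {b}).Infinite :=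
    Set.infinite_coe_iff.mp hb
  refine ⟨b.1, fun N => ?_⟩
  obtain ⟨M, hM, hMN⟩ := hbinf.exists_gt N
  refine ⟨σ M, seg_mono S H (by omega) (hσ M), ?_⟩
  exact congrArg Subtype.val hM

/-- The perpendicular ray, built by recursion using `ext_step`. -/
noncomputable def ray (hSfin : S.Finite) (hSgen : Subgroup.closure S = ⊤)
    (hind : H.index = 0) : ∀ n : ℕ, {g : G // PerpExt S H n g}
  | 0 => ⟨1, ext_zero S H hSfin hSgen hind⟩
  | n + 1 =>
    ⟨(ray hSfin hSgen hind n).1 *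
        (ext_step S H hSfin hSgen (ray hSfin hSgen hind n).2).choose,
      (ext_step S H hSfin hSgen (ray hSfin hSgen hind n).2).choose_spec.2⟩

lemma ray_step (hSfin : S.Finite) (hSgen : Subgroup.closure S = ⊤) (hind : H.index = 0)
    (n : ℕ) : ∃ s : G, (s ∈ S ∨ s⁻¹ ∈ S) ∧
      (ray S H hSfin hSgen hind (n + 1)).1 = (ray S H hSfin hSgen hind n).1 * s :=
  ⟨_, (ext_step S H hSfin hSgen (ray S H hSfin hSgen hind n).2).choose_spec.1, rfl⟩

end Aux

/-- For `H` of infinite index in the finitely generated group `G`, every `h ∈ H` is the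
initial point of an `H`-perpendicular geodesic ray in the Cayley graph `Γ(G,S)`:
a geodesic ray `γ` with `γ 0 = h` and `d_S(γ r, H) = r` for all `r > 0`. -/
theorem exists_perpendicular_geodesic_ray {G : Type*} [Group G] (S : Set G)
    (hSfin : S.Finite) (hSgen : Subgroup.closure S = ⊤)
    (H : Subgroup G) (hind : H.index = 0) (h : G) (hh : h ∈ H) :
    ∃ γ : ℕ → G, γ 0 = h ∧
      (∀ m n : ℕ, wordDist S (γ m) (γ n) = ((m : ℤ) - (n : ℤ)).natAbs) ∧
      (∀ r : ℕ, 0 < r → distToSubgroup S H (γ r) = r) := by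
  classical
  set γ' : ℕ → G := fun n => (ray S H hSfin hSgen hind n).1 with hγ'
  have hdts : ∀ n, distToSubgroup S H (γ' n) = n :=
    fun n => ext_dts S H (ray S H hSfin hSgen hind n).2
  have hub : ∀ m k : ℕ, wordDist S (γ' m) (γ' (m + k)) ≤ k := by
    intro m k
    induction k with
    | zero => simp [wordDist, wordLength_one]
    | succ k ih =>
      obtain ⟨s, hs, hstep⟩ := ray_step S H hSfin hSgen hind (m + k)
      have htri := wordDist_triangle S hSgen (γ' m) (γ' (m + k)) (γ' (m + k + 1))
      have hgen : wordDist S (γ' (m + k)) (γ' (m + k + 1)) ≤ 1 := by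
        have hgen' := wordDist_gen S (γ' (m + k)) s hs
        have : γ' (m + k + 1) = γ' (m + k) * s := hstep
        rw [this]
        exact hgen'
      have : m + (k + 1) = m + k + 1 := by omega
      rw [this]
      omega
  have hexact : ∀ m n : ℕ, m ≤ n → wordDist S (γ' m) (γ' n) = n - m := by
    intro m n hmn
    obtain ⟨k, rfl⟩ := Nat.exists_eq_add_of_le hmn
    have h1 := hub m k
    have h2 : (m + k : ℕ) ≤ wordDist S (γ' (m + k)) (γ' m) + m := by
      have := dts_lipschitz S H hSgen (γ' (m + k)) (γ' m)
      rw [hdts, hdts] at this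
      exact this
    have h3 := wordDist_symm S hSgen (γ' m) (γ' (m + k))
    omega
  refine ⟨fun n => h * γ' n, ?_, ?_, ?_⟩
  · have : γ' 0 = 1 := rfl
    simp [this]
  · intro m n
    rw [wordDist_left_invariant]
    rcases le_total m n with hmn | hnm
    · have := hexact m n hmn
      omega
    · have h1 := hexact n m hnm
      have h2 := wordDist_symm S hSgen (γ' m) (γ' n)
      omega
  · intro r _
    rw [dts_invariant S H (γ' r) h hh, hdts r]
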